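/- Let d ≥ 2, n ≥ d, and let ℓ ∈ ℝⁿ be an ordered, generic, d-regular length vector. Then for every subset J ⊆ {1,…,n−1} with |J| ≥ n−d, the set {x ∈ (S^{d−1})ⁿ : Σ_{i=1}^n ℓ_i x_i = 0 and x_j = x_n for all j ∈ J} is empty; equivalently, the moduli space M_d(ℓ_J) of the contracted length vector ℓ_J ∈ ℝ^{n−|J|} (obtained from ℓ by deleting the entries ℓ_j for j ∈ J and replacing ℓ_n by ℓ_n + Σ_{j∈J} ℓ_j) is empty. -/
import Mathlib


noncomputable section

/-- `ℝ^d` with the Euclidean norm. -/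
abbrev Euc (d : ℕ) := EuclideanSpace ℝ (Fin d)

/-- A subset `J` is `ℓ`-short if the sum of its entries is less than the sum over the complement. -/
def Short {n : ℕ} (ℓ : Fin n → ℝ) (J : Finset (Fin n)) : Prop :=
  ∑ j ∈ J, ℓ j < ∑ j ∈ Jᶜ, ℓ j

/-- A subset is `ℓ`-long if its complement is `ℓ`-short. -/
def Long {n : ℕ} (ℓ : Fin n → ℝ) (J : Finset (Fin n)) : Prop := Short ℓ Jᶜ

/-- `ℓ` is generic if every subset is `ℓ`-short or `ℓ`-long. -/
def Generic {n : ℕ} (ℓ : Fin n → ℝ) : Prop := ∀ J : Finset (Fin n), Short ℓ J ∨ Long ℓ J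

/-- `ℓ` is `d`-regular if the intersection of all `ℓ`-long subsets of cardinality `d-1`
is nonempty (with the convention that the empty intersection is everything). -/
def DRegular (d : ℕ) {n : ℕ} (ℓ : Fin n → ℝ) : Prop :=
  ∃ i : Fin n, ∀ J : Finset (Fin n), J.card = d - 1 → Long ℓ J → i ∈ J

lemma long_iff {n : ℕ} (ℓ : Fin n → ℝ) (T : Finset (Fin n)) :
    Long ℓ T ↔ ∑ j ∈ Tᶜ, ℓ j < ∑ j ∈ T, ℓ j := by
  simp [Long, Short, compl_compl]

lemma long_mono {n : ℕ} {ℓ : Fin n → ℝ} (hpos : ∀ i, 0 < ℓ i) {U T : Finset (Fin n)}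
    (h : U ⊆ T) (hU : Long ℓ U) : Long ℓ T := by
  rw [long_iff] at *
  have h1 : ∑ j ∈ U, ℓ j ≤ ∑ j ∈ T, ℓ j :=
    Finset.sum_le_sum_of_subset_of_nonneg h (fun i _ _ => (hpos i).le)
  have h2 : ∑ j ∈ Tᶜ, ℓ j ≤ ∑ j ∈ Uᶜ, ℓ j :=
    Finset.sum_le_sum_of_subset_of_nonneg (Finset.compl_subset_compl.mpr h)
      (fun i _ _ => (hpos i).le)
  linarith

/-- Let `d ≥ 2`, `n ≥ d`, and let `ℓ ∈ ℝⁿ` be an ordered generic `d`-regular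
length vector. Then for every subset `J` of the first `n-1` indices with `|J| ≥ n-d`, there is
no configuration of unit vectors `x ∈ (S^{d-1})ⁿ` with `∑ ℓᵢ xᵢ = 0` and `x_j = x_n` for all
`j ∈ J` (equivalently, the moduli space of the contracted length vector `ℓ_J` is empty). -/
theorem stmt10 (d n : ℕ) (hd : 2 ≤ d) (hn : d ≤ n) (ℓ : Fin n → ℝ)
    (hpos : ∀ i, 0 < ℓ i) (hord : Monotone ℓ) (hgen : Generic ℓ) (hreg : DRegular d ℓ)
    (J : Finset (Fin n)) (hJ : (⟨n - 1, by omega⟩ : Fin n) ∉ J) (hcard : n - d ≤ J.card) :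
    {x : Fin n → Euc d | (∀ i, ‖x i‖ = 1) ∧ ∑ i, ℓ i • x i = 0 ∧
      ∀ j ∈ J, x j = x ⟨n - 1, by omega⟩} = ∅ := by
  ext x
  simp only [Set.mem_setOf_eq, Set.mem_empty_iff_false, iff_false]
  rintro ⟨hnorm, hsum, hx⟩
  set m : Fin n := ⟨n - 1, by omega⟩ with hm
  set S : Finset (Fin n) := insert m J with hS
  have hxS : ∀ j ∈ S, x j = x m := by
    intro j hj
    rcases Finset.mem_insert.mp hj with h | h
    · rw [h]
    · exact hx j h
  have hsplit : ∑ i ∈ S, ℓ i • x i + ∑ i ∈ Sᶜ, ℓ i • x i = 0 := by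
    rw [Finset.sum_add_sum_compl]; exact hsum
  have hSsum : ∑ i ∈ S, ℓ i • x i = (∑ i ∈ S, ℓ i) • x m := by
    rw [Finset.sum_smul]
    exact Finset.sum_congr rfl fun j hj => by rw [hxS j hj]
  have heq : (∑ i ∈ S, ℓ i) • x m = -∑ i ∈ Sᶜ, ℓ i • x i := by
    rw [← hSsum]
    exact eq_neg_of_add_eq_zero_left hsplit
  have h1 : ‖(∑ i ∈ S, ℓ i) • x m‖ = ∑ i ∈ S, ℓ i := by
    rw [norm_smul, hnorm m, mul_one, Real.norm_eq_abs, abs_of_pos]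
    exact Finset.sum_pos (fun i _ => hpos i) ⟨m, Finset.mem_insert_self _ _⟩
  have h2 : ‖∑ i ∈ Sᶜ, ℓ i • x i‖ ≤ ∑ i ∈ Sᶜ, ℓ i := by
    calc ‖∑ i ∈ Sᶜ, ℓ i • x i‖ ≤ ∑ i ∈ Sᶜ, ‖ℓ i • x i‖ := norm_sum_le _ _
      _ = ∑ i ∈ Sᶜ, ℓ i := by
        refine Finset.sum_congr rfl fun i _ => ?_
        rw [norm_smul, hnorm i, mul_one, Real.norm_eq_abs, abs_of_pos (hpos i)]
  have hkey : (∑ i ∈ S, ℓ i) ≤ ∑ i ∈ Sᶜ, ℓ i := by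
    rw [← h1, heq, norm_neg]; exact h2
  have hnotlong : ¬ Long ℓ S := by rw [long_iff]; exact not_lt.mpr hkey
  have hshortS : Short ℓ S := (hgen S).resolve_right hnotlong
  have hlongSc : Long ℓ Sᶜ := by rw [Long, compl_compl]; exact hshortS
  -- cardinalities
  have hScard : S.card = J.card + 1 := Finset.card_insert_of_notMem hJ
  have hJlt : J.card < n := by
    have := Finset.card_le_univ S
    simp only [Finset.card_univ, Fintype.card_fin] at this
    omega
  have hSccard : Sᶜ.card ≤ d - 1 := by
    have := Finset.card_compl S
    simp only [Fintype.card_fin] at this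
    omega
  -- extend Sᶜ to a long set T of card d-1 avoiding m
  have hmS : m ∈ S := Finset.mem_insert_self _ _
  have hsub : Sᶜ ⊆ Finset.univ.erase m := by
    intro a ha
    rw [Finset.mem_erase]
    refine ⟨?_, Finset.mem_univ a⟩
    intro h; rw [h] at ha; exact (Finset.mem_compl.mp ha) hmS
  have herasecard : (Finset.univ.erase m).card = n - 1 := by
    rw [Finset.card_erase_of_mem (Finset.mem_univ m), Finset.card_univ, Fintype.card_fin]
  obtain ⟨T, hScT, hTsub, hTcard⟩ :=
    Finset.exists_subsuperset_card_eq hsub hSccard (by omega)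
  have hmT : m ∉ T := fun h => (Finset.mem_erase.mp (hTsub h)).1 rfl
  have hTlong : Long ℓ T := long_mono hpos hScT hlongSc
  obtain ⟨i, hi⟩ := hreg
  have hiT : i ∈ T := hi T hTcard hTlong
  have him : i ≠ m := fun h => hmT (h ▸ hiT)
  -- swap i for m
  set T' : Finset (Fin n) := insert m (T.erase i) with hT'
  have hmTe : m ∉ T.erase i := fun h => hmT (Finset.mem_of_mem_erase h)
  have hT'card : T'.card = d - 1 := by
    rw [hT', Finset.card_insert_of_notMem hmTe, Finset.card_erase_of_mem hiT, hTcard]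
    omega
  have hle : ℓ i ≤ ℓ m := by
    apply hord
    rw [Fin.le_def]
    have := i.isLt
    simp only [hm]
    omega
  have hsumT : ℓ i + ∑ j ∈ T.erase i, ℓ j = ∑ j ∈ T, ℓ j := Finset.add_sum_erase T ℓ hiT
  have hsumT' : ∑ j ∈ T', ℓ j = ℓ m + ∑ j ∈ T.erase i, ℓ j :=
    Finset.sum_insert hmTe
  have hTc := Finset.sum_add_sum_compl T ℓ
  have hT'c := Finset.sum_add_sum_compl T' ℓ
  have hT'long : Long ℓ T' := by
    rw [long_iff] at hTlong ⊢
    linarith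
  have hiT' : i ∈ T' := hi T' hT'card hT'long
  rcases Finset.mem_insert.mp hiT' with h | h
  · exact him h
  · exact Finset.notMem_erase i T h
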